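/- arXiv:1910.11181 — 2 statements merged into one kernel-verified Lean document; each statement's English description precedes it below -/
import Mathlib

section
/- Suppose σ is a winning strategy for player I in the measure game G(s,A). Define M : 2^{<ω} → ℝ by: M(∅) = m_0 + m_1 where (m_0, m_1) is σ's first move; for a finite binary string t that is a legal sequence of II's moves against σ, if σ's response at position t is (m_{t⌢0}, m_{t⌢1}) then M(t⌢i) = m_{t⌢i} for i ∈ {0,1}; and M(t⌢i) = 0 if t is not a legal sequence of II's moves against σ. Then M is a scaled measure, and if T is the support of M, then every branch of T lies in the complement of A and μ([T]) ≥ M(∅) > s. -/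
open MeasureTheory

namespace MeasureGame

/-- Cantor space `2^ω`. -/
abbrev Cantor : Type := ℕ → Bool

/-- The basic cylinder set `N_t` determined by a finite binary string `t`. -/
def cyl (t : List Bool) : Set Cantor := {x | ∀ i : Fin t.length, x i.1 = t.get i}

/-- A round of the measure game: player I's pair of rationals, then player II's bit. -/
abbrev GRound : Type := (ℚ × ℚ) × Bool

/-- A strategy for player I in the measure game. -/
abbrev StratI : Type := List GRound → ℚ × ℚ

/-- A strategy for player II in the measure game. -/
abbrev StratII : Type := List GRound → ℚ × ℚ → Bool

/-- A run of the measure game. -/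
abbrev Run : Type := ℕ → GRound

/-- The history (list of completed rounds) before round `n`. -/
def hist (r : Run) (n : ℕ) : List GRound := (List.range n).map r

/-- Player II's bit at round `n`. -/
def bits (r : Run) (n : ℕ) : Bool := (r n).2

/-- The finite binary string of player II's first `n` bits. -/
def path (r : Run) (n : ℕ) : List Bool := (List.range n).map (bits r)

/-- The value player I assigned at round `n` to the one-bit extension of the current path by `b`. -/
def valI (r : Run) (n : ℕ) (b : Bool) : ℚ := if b then (r n).1.2 else (r n).1.1

/-- The value selected by player II's move at round `n`. -/
def sel (r : Run) (n : ℕ) : ℚ := valI r n (bits r n)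

/-- Legality requirements on the single value player I assigned to `path r n ++ [b]`:
it is nonnegative, at most `μ(N_{t⌢b})`, and strictly below it when the latter is positive. -/
def mOK (μ : Measure Cantor) (r : Run) (n : ℕ) (b : Bool) : Prop :=
  0 ≤ valI r n b ∧ ((valI r n b : ℝ) ≤ (μ (cyl (path r n ++ [b]))).toReal) ∧
    (0 < (μ (cyl (path r n ++ [b]))).toReal → (valI r n b : ℝ) < (μ (cyl (path r n ++ [b]))).toReal)

/-- Player I's move at round `n` of a run is legal (for the game `G(s, ·)`). -/
def IOK (μ : Measure Cantor) (s : ℝ) (r : Run) : ℕ → Prop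
  | 0 => mOK μ r 0 false ∧ mOK μ r 0 true ∧ s < ((r 0).1.1 : ℝ) + ((r 0).1.2 : ℝ)
  | (n + 1) => mOK μ r (n + 1) false ∧ mOK μ r (n + 1) true ∧
      (r (n + 1)).1.1 + (r (n + 1)).1.2 = sel r n

/-- Player II's move at round `n` of a run is legal: the selected value is nonzero. -/
def IIOK (r : Run) (n : ℕ) : Prop := sel r n ≠ 0

/-- The run `r` is consistent with player I's strategy `σ`. -/
def ConsI (σ : StratI) (r : Run) : Prop := ∀ n, (r n).1 = σ (hist r n)

/-- The run `r` is consistent with player II's strategy `τ`. -/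
def ConsII (τ : StratII) (r : Run) : Prop := ∀ n, (r n).2 = τ (hist r n) (r n).1

/-- Player II wins the run `r` of `G(s, A)`: either player I is the first to break a rule,
or all rules are followed and the sequence of II's bits belongs to `A`. -/
def IIWinsRun (μ : Measure Cantor) (s : ℝ) (A : Set Cantor) (r : Run) : Prop :=
  (∃ n, (∀ m < n, IOK μ s r m ∧ IIOK r m) ∧ ¬ IOK μ s r n) ∨
    ((∀ n, IOK μ s r n ∧ IIOK r n) ∧ bits r ∈ A)

/-- Player I has a winning strategy in the measure game `G(s, A)`. -/
def WinsI (μ : Measure Cantor) (s : ℝ) (A : Set Cantor) : Prop :=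
  ∃ σ : StratI, ∀ r : Run, ConsI σ r → ¬ IIWinsRun μ s A r

/-- Player II has a winning strategy in the measure game `G(s, A)`. -/
def WinsII (μ : Measure Cantor) (s : ℝ) (A : Set Cantor) : Prop :=
  ∃ τ : StratII, ∀ r : Run, ConsII τ r → IIWinsRun μ s A r

/-- The outer measure `μ*(A) = inf {μ(U) : U open, A ⊆ U}`. -/
noncomputable def outerM (μ : Measure Cantor) (A : Set Cantor) : ℝ :=
  sInf {v : ℝ | ∃ U : Set Cantor, IsOpen U ∧ A ⊆ U ∧ v = (μ U).toReal}

/-- The inner measure `μ_*(A) = sup {μ(F) : F closed, F ⊆ A}`. -/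
noncomputable def innerM (μ : Measure Cantor) (A : Set Cantor) : ℝ :=
  sSup {v : ℝ | ∃ F : Set Cantor, IsClosed F ∧ F ⊆ A ∧ v = (μ F).toReal}


open scoped Classical

/-- `M : 2^{<ω} → ℝ` is a scaled measure for `μ`. -/
def ScaledMeasure (μ : Measure Cantor) (M : List Bool → ℝ) : Prop :=
  0 < M [] ∧ ∀ t : List Bool,
    (0 ≤ M t ∧ M t ≤ (μ (cyl t)).toReal) ∧ M t = M (t ++ [false]) + M (t ++ [true])

/-- The set of infinite branches through a set `T` of finite binary strings. -/
def branches (T : Set (List Bool)) : Set Cantor := {x | ∀ n : ℕ, (List.range n).map x ∈ T}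

/-- The history of the run in which player I follows `σ` and player II plays the bits of `x`. -/
def histOf (σ : StratI) (x : Cantor) : ℕ → List GRound
  | 0 => []
  | (n + 1) => histOf σ x n ++ [(σ (histOf σ x n), x n)]

/-- The run in which player I follows `σ` and player II plays the bits of `x`. -/
def runOf (σ : StratI) (x : Cantor) : Run := fun n => (σ (histOf σ x n), x n)

/-- The finite binary string `t` is a legal sequence of moves by player II against `σ`,
i.e. II's rule (the selected value is nonzero) is obeyed at every round. -/
def legalAgainst (σ : StratI) (t : List Bool) : Prop :=
  ∀ n < t.length, sel (runOf σ (fun i => t.getD i false)) n ≠ 0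

/-- `σ`'s response at the position where player II has played the bits of `t`. -/
def respOf (σ : StratI) (t : List Bool) : ℚ × ℚ :=
  σ (histOf σ (fun i => t.getD i false) t.length)

/-- The function `M` induced by player I's strategy `σ`: `M(∅)` is the sum of `σ`'s first
move, `M(t⌢i)` is the `i`-component of `σ`'s response at `t` when `t` is a legal sequence of
II's moves against `σ`, and `M(t⌢i) = 0` otherwise. -/
noncomputable def inducedM (σ : StratI) (t : List Bool) : ℝ :=
  if t.isEmpty then ((σ []).1 : ℝ) + ((σ []).2 : ℝ)
  else if legalAgainst σ t.dropLast then
    (((if t.getLastD false then (respOf σ t.dropLast).2 else (respOf σ t.dropLast).1) : ℚ) : ℝ)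
  else 0

-- cylinder lemmas
lemma mem_cyl {x : Cantor} {t : List Bool} : x ∈ cyl t ↔ ∀ i, (h : i < t.length) → x i = t[i] := by
  constructor
  · intro hx i h; exact hx ⟨i, h⟩
  · intro hx i; exact hx i.1 i.2

lemma cyl_measurable (t : List Bool) : MeasurableSet (cyl t) := by
  have : cyl t = ⋂ i : Fin t.length, (fun x : Cantor => x i.1) ⁻¹' {t.get i} := by
    ext x; simp [cyl, Set.mem_iInter]
  rw [this]
  exact MeasurableSet.iInter fun i => (measurable_pi_apply i.1) (measurableSet_singleton _)

lemma cyl_nil : cyl [] = Set.univ := by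
  ext x; simp [cyl]

lemma cyl_append {t : List Bool} {b : Bool} {x : Cantor} :
    x ∈ cyl (t ++ [b]) ↔ x ∈ cyl t ∧ x t.length = b := by
  simp only [mem_cyl]
  have hlen : (t ++ [b]).length = t.length + 1 := by simp
  constructor
  · intro h
    refine ⟨fun i hi => ?_, ?_⟩
    · have := h i (by omega)
      rwa [List.getElem_append_left hi] at this
    · have := h t.length (by omega)
      rw [List.getElem_concat_length rfl] at this; exact this
  · rintro ⟨h1, h2⟩ i hi
    rw [hlen] at hi
    rcases Nat.lt_succ_iff_lt_or_eq.mp hi with hi' | hi'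
    · rw [List.getElem_append_left hi']; exact h1 i hi'
    · subst hi'; rw [List.getElem_concat_length rfl]; exact h2

lemma cyl_disjoint {t u : List Bool} (hlen : t.length = u.length) (hne : t ≠ u) :
    Disjoint (cyl t) (cyl u) := by
  rw [Set.disjoint_left]
  intro x hxt hxu
  apply hne
  apply List.ext_getElem hlen
  intro i h1 h2
  rw [← mem_cyl.mp hxt i h1, ← mem_cyl.mp hxu i h2]

lemma cyl_split (μ : Measure Cantor) [IsProbabilityMeasure μ] (t : List Bool) :
    (μ (cyl t)).toReal = (μ (cyl (t ++ [false]))).toReal + (μ (cyl (t ++ [true]))).toReal := by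
  have hsplit : cyl t = cyl (t ++ [false]) ∪ cyl (t ++ [true]) := by
    ext x
    simp only [Set.mem_union, cyl_append]
    constructor
    · intro hx; cases h : x t.length
      · exact Or.inl ⟨hx, rfl⟩
      · exact Or.inr ⟨hx, rfl⟩
    · rintro (⟨hx, _⟩ | ⟨hx, _⟩) <;> exact hx
  have hdisj : Disjoint (cyl (t ++ [false])) (cyl (t ++ [true])) := by
    apply cyl_disjoint (by simp)
    intro h
    have := congrArg (fun l => l.getLastD true) h
    simp at this
  have hu : μ (cyl (t ++ [false]) ∪ cyl (t ++ [true])) =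
      μ (cyl (t ++ [false])) + μ (cyl (t ++ [true])) :=
    measure_union hdisj (cyl_measurable (t ++ [true]))
  rw [hsplit, hu, ENNReal.toReal_add (measure_ne_top μ _) (measure_ne_top μ _)]

-- run lemmas
lemma hist_runOf (σ : StratI) (x : Cantor) (n : ℕ) : hist (runOf σ x) n = histOf σ x n := by
  induction n with
  | zero => rfl
  | succ n ih =>
    rw [hist, List.range_succ, List.map_append, ← hist, ih]
    rfl

lemma consI_runOf (σ : StratI) (x : Cantor) : ConsI σ (runOf σ x) := by
  intro n; rw [hist_runOf]; rfl

lemma histOf_congr (σ : StratI) {x y : Cantor} {n : ℕ} (h : ∀ i < n, x i = y i) :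
    histOf σ x n = histOf σ y n := by
  induction n with
  | zero => rfl
  | succ n ih =>
    have h1 : histOf σ x n = histOf σ y n := ih fun i hi => h i (Nat.lt_succ_of_lt hi)
    rw [histOf, histOf, h1, h n (Nat.lt_succ_self n)]

lemma sel_congr (σ : StratI) {x y : Cantor} {n : ℕ} (h : ∀ i ≤ n, x i = y i) :
    sel (runOf σ x) n = sel (runOf σ y) n := by
  have h1 : histOf σ x n = histOf σ y n := histOf_congr σ fun i hi => h i (Nat.le_of_lt hi)
  simp only [sel, valI, bits, runOf, h1, h n le_rfl]
  exact if_congr Iff.rfl rfl rfl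

lemma bits_runOf (σ : StratI) (x : Cantor) : bits (runOf σ x) = x := rfl

lemma path_runOf (σ : StratI) (x : Cantor) (n : ℕ) :
    path (runOf σ x) n = (List.range n).map x := rfl

lemma legal_of_prefix (σ : StratI) {u t : List Bool} (hp : u <+: t)
    (ht : legalAgainst σ t) : legalAgainst σ u := by
  intro n hn
  have hagree : ∀ i ≤ n, (fun i => u.getD i false) i = (fun i => t.getD i false) i := by
    intro i hi
    have hi' : i < u.length := lt_of_le_of_lt hi hn
    simp only [List.getD_eq_getElem?_getD]
    rw [List.getElem?_eq_getElem hi', List.getElem?_eq_getElem (lt_of_lt_of_le hi' hp.length_le),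
      hp.getElem hi']
  rw [sel_congr σ hagree]
  exact ht n (lt_of_lt_of_le hn hp.length_le)
-- list helpers
lemma getD_lt {t : List Bool} {i : ℕ} (h : i < t.length) : t.getD i false = t[i] := by
  simp [List.getD_eq_getElem?_getD, List.getElem?_eq_getElem h]

lemma map_range_eq {u : List Bool} {x : Cantor} (h : ∀ i, (hi : i < u.length) → x i = u[i]) :
    (List.range u.length).map x = u := by
  apply List.ext_getElem (by simp)
  intro i h1 h2
  simp only [List.getElem_map, List.getElem_range]
  exact h i h2

lemma dropLast_getLastD {t : List Bool} (h : t ≠ []) :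
    t.dropLast ++ [t.getLastD false] = t := by
  rw [List.getLastD_eq_getLast?, List.getLast?_eq_getLast h, Option.getD_some]
  exact List.dropLast_append_getLast h

lemma getD_last {t : List Bool} (h : t ≠ []) :
    t.getD (t.length - 1) false = t.getLastD false := by
  have h1 : t.length - 1 < t.length := by
    have := List.length_pos_iff.mpr h; omega
  rw [getD_lt h1, List.getLastD_eq_getLast?, List.getLast?_eq_getLast h, Option.getD_some,
    List.getLast_eq_getElem]

lemma getD_dropLast {t : List Bool} {i : ℕ} (h : i < t.dropLast.length) :
    t.getD i false = t.dropLast.getD i false := by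
  have h2 : i < t.length := by simp at h; omega
  rw [getD_lt h2, getD_lt h, List.getElem_dropLast]

-- winning strategy consequences
lemma IOK_all {μ : Measure Cantor} {s : ℝ} {A : Set Cantor} {σ : StratI}
    (hσ : ∀ r : Run, ConsI σ r → ¬ IIWinsRun μ s A r) {r : Run} (hr : ConsI σ r) :
    ∀ n, (∀ m < n, IIOK r m) → IOK μ s r n := by
  have h := hσ r hr
  rw [IIWinsRun, not_or] at h
  obtain ⟨h1, _⟩ := h
  push_neg at h1
  intro n
  induction n using Nat.strong_induction_on with
  | _ n ih =>
    intro hii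
    exact h1 n (fun m hm => ⟨ih m hm (fun k hk => hii k (hk.trans hm)), hii m hm⟩)

lemma notA_of_winning {μ : Measure Cantor} {s : ℝ} {A : Set Cantor} {σ : StratI}
    (hσ : ∀ r : Run, ConsI σ r → ¬ IIWinsRun μ s A r) {r : Run} (hr : ConsI σ r)
    (hii : ∀ n, IIOK r n) : bits r ∉ A := by
  have h := hσ r hr
  rw [IIWinsRun, not_or] at h
  obtain ⟨_, h2⟩ := h
  push_neg at h2
  exact h2 (fun n => ⟨IOK_all hσ hr n (fun m _ => hii m), hii n⟩)

-- formulas for inducedM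
lemma inducedM_val (σ : StratI) {t : List Bool} (hne : t ≠ [])
    (hleg : legalAgainst σ t.dropLast) :
    inducedM σ t = ((sel (runOf σ (fun i => t.getD i false)) t.dropLast.length : ℚ) : ℝ) := by
  rw [inducedM, if_neg (by simpa using hne), if_pos hleg]
  have hlen : t.dropLast.length = t.length - 1 := List.length_dropLast
  have hbit : (fun i => t.getD i false) t.dropLast.length = t.getLastD false := by
    simp only [hlen]; exact getD_last hne
  have hhist : histOf σ (fun i => t.getD i false) t.dropLast.length =
      histOf σ (fun i => t.dropLast.getD i false) t.dropLast.length :=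
    histOf_congr σ (fun i hi => getD_dropLast hi)
  simp only [sel, valI, bits, runOf, hbit, hhist, respOf]

lemma inducedM_concat (σ : StratI) {t : List Bool} (b : Bool) (hleg : legalAgainst σ t) :
    inducedM σ (t ++ [b]) =
      (((if b then (respOf σ t).2 else (respOf σ t).1 : ℚ)) : ℝ) := by
  rw [inducedM, if_neg (by simp), List.dropLast_concat, if_pos hleg]
  congr 2
  rw [List.getLastD_concat]

lemma inducedM_concat_zero (σ : StratI) {t : List Bool} (b : Bool) (hleg : ¬ legalAgainst σ t) :
    inducedM σ (t ++ [b]) = 0 := by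
  rw [inducedM, if_neg (by simp), List.dropLast_concat, if_neg hleg]

lemma inducedM_nil (σ : StratI) :
    inducedM σ [] = ((σ []).1 : ℝ) + ((σ []).2 : ℝ) := rfl

lemma legalAgainst_nil (σ : StratI) : legalAgainst σ [] := by
  intro n hn; simp at hn

lemma respOf_nil (σ : StratI) : respOf σ [] = σ [] := rfl
lemma mOK_of_IOK {μ : Measure Cantor} {s : ℝ} {r : Run} {n : ℕ} (h : IOK μ s r n) (b : Bool) :
    mOK μ r n b := by
  cases n with
  | zero => obtain ⟨h0, h1, _⟩ := h; cases b; exacts [h0, h1]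
  | succ n => obtain ⟨h0, h1, _⟩ := h; cases b; exacts [h0, h1]

lemma s_lt_inducedM {μ : Measure Cantor} {s : ℝ} {A : Set Cantor} {σ : StratI}
    (hσ : ∀ r : Run, ConsI σ r → ¬ IIWinsRun μ s A r) : s < inducedM σ [] := by
  have h := IOK_all hσ (consI_runOf σ (fun _ => false)) 0 (fun m hm => absurd hm (Nat.not_lt_zero m))
  obtain ⟨_, _, hs⟩ := h
  simpa [runOf, histOf, inducedM_nil] using hs

lemma inducedM_add {μ : Measure Cantor} {s : ℝ} {A : Set Cantor} {σ : StratI}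
    (hσ : ∀ r : Run, ConsI σ r → ¬ IIWinsRun μ s A r) (t : List Bool) :
    inducedM σ t = inducedM σ (t ++ [false]) + inducedM σ (t ++ [true]) := by
  rcases eq_or_ne t [] with rfl | hne
  · have h1 := inducedM_concat σ false (legalAgainst_nil σ)
    have h2 := inducedM_concat σ true (legalAgainst_nil σ)
    simp only [List.nil_append] at h1 h2 ⊢
    rw [inducedM_nil, h1, h2]
    simp [respOf_nil]
  · by_cases hleg : legalAgainst σ t
    · obtain ⟨n, hn⟩ : ∃ n, t.length = n + 1 :=
        ⟨t.length - 1, by have := List.length_pos_iff.mpr hne; omega⟩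
      set x : Cantor := fun i => t.getD i false with hx
      have hii : ∀ m < t.length, IIOK (runOf σ x) m := fun m hm => hleg m hm
      have hIOK := IOK_all hσ (consI_runOf σ x) t.length (fun m hm => hii m hm)
      rw [hn] at hIOK
      obtain ⟨_, _, hsum⟩ := hIOK
      have hMt : inducedM σ t = ((sel (runOf σ x) t.dropLast.length : ℚ) : ℝ) :=
        inducedM_val σ hne (legal_of_prefix σ (List.dropLast_prefix t) hleg)
      have hlen : t.dropLast.length = n := by simp [List.length_dropLast, hn]
      have hresp : respOf σ t = (runOf σ x (n + 1)).1 := by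
        rw [respOf, ← hx, hn]; rfl
      rw [inducedM_concat σ false hleg, inducedM_concat σ true hleg, hMt, hlen, hresp, ← hsum]
      simp only [if_true, if_false]
      push_cast; ring
    · have h0 : inducedM σ t = 0 := by
        by_cases hd : legalAgainst σ t.dropLast
        · rw [inducedM_val σ hne hd]
          by_contra hne0
          apply hleg
          intro m hm
          have hlen : t.dropLast.length = t.length - 1 := List.length_dropLast
          rcases Nat.lt_or_ge m t.dropLast.length with hm' | hm'
          · have heq : sel (runOf σ (fun i => t.getD i false)) m =
                sel (runOf σ (fun i => t.dropLast.getD i false)) m :=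
              sel_congr σ (fun i hi => getD_dropLast (lt_of_le_of_lt hi hm'))
            rw [heq]; exact hd m hm'
          · have hme : m = t.dropLast.length := by
              have := List.length_pos_iff.mpr hne; omega
            rw [hme]
            intro h0
            apply hne0
            rw [h0]; norm_num
        · rw [inducedM, if_neg (by simpa using hne), if_neg hd]
      rw [h0, inducedM_concat_zero σ false hleg, inducedM_concat_zero σ true hleg]; ring

lemma inducedM_bounds_ne {μ : Measure Cantor} {s : ℝ} {A : Set Cantor} {σ : StratI}
    (hσ : ∀ r : Run, ConsI σ r → ¬ IIWinsRun μ s A r) {t : List Bool} (hne : t ≠ []) :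
    0 ≤ inducedM σ t ∧ inducedM σ t ≤ (μ (cyl t)).toReal := by
  by_cases hd : legalAgainst σ t.dropLast
  · set x : Cantor := fun i => t.getD i false with hx
    set n := t.dropLast.length with hnd
    have hM := inducedM_val σ hne hd
    have hii : ∀ m < n, IIOK (runOf σ x) m := by
      intro m hm
      have heq : sel (runOf σ x) m = sel (runOf σ (fun i => t.dropLast.getD i false)) m :=
        sel_congr σ (fun i hi => getD_dropLast (lt_of_le_of_lt hi hm))
      rw [IIOK, heq]; exact hd m hm
    have hIOK := IOK_all hσ (consI_runOf σ x) n hii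
    obtain ⟨h0, h1, _⟩ := mOK_of_IOK hIOK (bits (runOf σ x) n)
    have hpath : path (runOf σ x) n ++ [bits (runOf σ x) n] = t := by
      have hpath1 : path (runOf σ x) n = t.dropLast := by
        rw [path_runOf]
        exact map_range_eq (fun i hi => by
          show t.getD i false = _
          rw [getD_dropLast hi, getD_lt hi])
      have hbit : bits (runOf σ x) n = t.getLastD false := by
        show x n = _
        rw [hx]
        simp only [hnd, List.length_dropLast]
        exact getD_last hne
      rw [hpath1, hbit]; exact dropLast_getLastD hne
    have hselM : inducedM σ t = ((valI (runOf σ x) n (bits (runOf σ x) n) : ℚ) : ℝ) := hM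
    constructor
    · rw [hselM]; exact_mod_cast h0
    · rw [hselM]; rw [hpath] at h1; exact h1
  · have h0 : inducedM σ t = 0 := by rw [inducedM, if_neg (by simpa using hne), if_neg hd]
    rw [h0]; exact ⟨le_refl 0, ENNReal.toReal_nonneg⟩

lemma inducedM_bounds {μ : Measure Cantor} [IsProbabilityMeasure μ] {s : ℝ} {A : Set Cantor}
    {σ : StratI} (hσ : ∀ r : Run, ConsI σ r → ¬ IIWinsRun μ s A r) (hs0 : 0 ≤ s) (t : List Bool) :
    0 ≤ inducedM σ t ∧ inducedM σ t ≤ (μ (cyl t)).toReal := by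
  rcases eq_or_ne t [] with rfl | hne
  · constructor
    · exact le_of_lt (lt_of_le_of_lt hs0 (s_lt_inducedM hσ))
    · rw [inducedM_add hσ [], cyl_split μ []]
      gcongr
      · exact (inducedM_bounds_ne hσ (by simp)).2
      · exact (inducedM_bounds_ne hσ (by simp)).2
  · exact inducedM_bounds_ne hσ hne
lemma branches_subset_compl {μ : Measure Cantor} {s : ℝ} {A : Set Cantor} {σ : StratI}
    (hσ : ∀ r : Run, ConsI σ r → ¬ IIWinsRun μ s A r) :
    branches {t | 0 < inducedM σ t} ⊆ Aᶜ := by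
  intro x hx
  have hii : ∀ n, IIOK (runOf σ x) n := by
    intro n
    set t : List Bool := (List.range (n + 1)).map x with ht
    have htne : t ≠ [] := by simp [ht]
    have hlen : t.length = n + 1 := by simp [ht]
    have hxd : ∀ i, i ≤ n → t.getD i false = x i := by
      intro i hi
      rw [getD_lt (by rw [hlen]; omega)]
      simp [ht, List.getElem_map, List.getElem_range]
    have hpos : 0 < inducedM σ t := hx (n + 1)
    by_cases hd : legalAgainst σ t.dropLast
    · have hM := inducedM_val σ htne hd
      have hlen2 : t.dropLast.length = n := by simp [List.length_dropLast, hlen]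
      rw [hM, hlen2] at hpos
      have heq : sel (runOf σ x) n = sel (runOf σ (fun i => t.getD i false)) n :=
        sel_congr σ (fun i hi => (hxd i hi).symm)
      rw [IIOK, heq]
      intro h0
      rw [h0] at hpos
      norm_num at hpos
    · rw [inducedM, if_neg (by simpa using htne), if_neg hd] at hpos
      norm_num at hpos
  have hnot := notA_of_winning hσ (consI_runOf σ x) hii
  rwa [bits_runOf] at hnot

lemma inducedM_pos_parent {μ : Measure Cantor} [IsProbabilityMeasure μ] {s : ℝ} {A : Set Cantor} {σ : StratI}
    (hσ : ∀ r : Run, ConsI σ r → ¬ IIWinsRun μ s A r) (hs0 : 0 ≤ s) {t : List Bool} {b : Bool}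
    (h : 0 < inducedM σ (t ++ [b])) : 0 < inducedM σ t := by
  rw [inducedM_add hσ t]
  cases b
  · have := (inducedM_bounds hσ hs0 (t ++ [true])).1
    linarith
  · have := (inducedM_bounds hσ hs0 (t ++ [false])).1
    linarith

lemma sum_succ_split {n : ℕ} (f : (Fin (n + 1) → Bool) → ℝ) :
    ∑ v : Fin (n + 1) → Bool, f v = ∑ b : Bool, ∑ w : Fin n → Bool, f (Fin.cons b w) := by
  calc ∑ v : Fin (n + 1) → Bool, f v
      = ∑ p : Bool × (Fin n → Bool), f (Fin.cons p.1 p.2) :=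
        Fintype.sum_equiv (Fin.consEquiv (fun _ => Bool)).symm _ _
          (fun v => by simp [Fin.consEquiv, Fin.cons_self_tail])
    _ = ∑ b : Bool, ∑ w : Fin n → Bool, f (Fin.cons b w) :=
        Fintype.sum_prod_type (fun p => f (Fin.cons p.1 p.2))

lemma inducedM_sum_ofFn {μ : Measure Cantor} {s : ℝ} {A : Set Cantor} {σ : StratI}
    (hσ : ∀ r : Run, ConsI σ r → ¬ IIWinsRun μ s A r) (n : ℕ) (t : List Bool) :
    inducedM σ t = ∑ v : Fin n → Bool, inducedM σ (t ++ List.ofFn v) := by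
  induction n generalizing t with
  | zero => simp
  | succ n ih =>
    rw [sum_succ_split (fun v => inducedM σ (t ++ List.ofFn v))]
    have hofn : ∀ (b : Bool) (w : Fin n → Bool),
        t ++ List.ofFn (Fin.cons b w) = (t ++ [b]) ++ List.ofFn w := by
      intro b w
      rw [List.ofFn_succ]
      simp only [Fin.cons_zero, Fin.cons_succ]
      rw [List.append_cons]
    calc inducedM σ t = inducedM σ (t ++ [false]) + inducedM σ (t ++ [true]) :=
          inducedM_add hσ t
      _ = ∑ b : Bool, inducedM σ (t ++ [b]) := by simp [Fintype.sum_bool]; ring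
      _ = ∑ b : Bool, ∑ w : Fin n → Bool, inducedM σ ((t ++ [b]) ++ List.ofFn w) := by
          refine Finset.sum_congr rfl fun b _ => ih (t ++ [b])
      _ = ∑ b : Bool, ∑ w : Fin n → Bool, inducedM σ (t ++ List.ofFn (Fin.cons b w)) := by
          refine Finset.sum_congr rfl fun b _ => Finset.sum_congr rfl fun w _ => by
            rw [hofn b w]
lemma map_range_ofFn (x : Cantor) (n : ℕ) :
    (List.range n).map x = List.ofFn (fun i : Fin n => x i.1) := by
  apply List.ext_getElem (by simp)
  intro i h1 h2
  simp

lemma U_eq_biUnion (σ : StratI) (n : ℕ) :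
    {x : Cantor | 0 < inducedM σ ((List.range n).map x)} =
      ⋃ v ∈ Finset.univ.filter (fun v : Fin n → Bool => 0 < inducedM σ (List.ofFn v)),
        cyl (List.ofFn v) := by
  ext x
  simp only [Set.mem_setOf_eq, Set.mem_iUnion, Finset.mem_filter, Finset.mem_univ, true_and,
    exists_prop]
  constructor
  · intro h
    refine ⟨fun i => x i.1, by rwa [← map_range_ofFn], ?_⟩
    rw [mem_cyl]
    intro i hi
    simp
  · rintro ⟨v, hv, hx⟩
    have hxv : ∀ i : Fin n, x i.1 = v i := by
      intro i
      have := mem_cyl.mp hx i.1 (by simp)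
      simpa using this
    rw [map_range_ofFn]
    have : (fun i : Fin n => x i.1) = v := funext hxv
    rwa [this]

lemma inducedM_le_measure_branches {μ : Measure Cantor} [IsProbabilityMeasure μ] {s : ℝ}
    {A : Set Cantor} {σ : StratI}
    (hσ : ∀ r : Run, ConsI σ r → ¬ IIWinsRun μ s A r) (hs0 : 0 ≤ s) :
    inducedM σ [] ≤ (μ (branches {t | 0 < inducedM σ t})).toReal := by
  set U : ℕ → Set Cantor := fun n => {x | 0 < inducedM σ ((List.range n).map x)} with hU
  have hmeas : ∀ n, MeasurableSet (U n) := by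
    intro n
    rw [hU]
    simp only
    rw [U_eq_biUnion σ n]
    exact Finset.measurableSet_biUnion _ (fun v _ => cyl_measurable _)
  have hbound : ∀ n, inducedM σ [] ≤ (μ (U n)).toReal := by
    intro n
    have hUeq := U_eq_biUnion σ n
    set S := Finset.univ.filter (fun v : Fin n → Bool => 0 < inducedM σ (List.ofFn v)) with hS
    have hdisj : (S : Set (Fin n → Bool)).PairwiseDisjoint (fun v => cyl (List.ofFn v)) := by
      intro v _ w _ hvw
      exact cyl_disjoint (by simp) (fun h => hvw (List.ofFn_injective h))
    have hcalc : inducedM σ [] ≤ ∑ v ∈ S, (μ (cyl (List.ofFn v))).toReal := by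
      calc inducedM σ [] = ∑ v : Fin n → Bool, inducedM σ (List.ofFn v) := by
            simpa using inducedM_sum_ofFn hσ n []
        _ = ∑ v ∈ S, inducedM σ (List.ofFn v) := by
            rw [hS]
            refine (Finset.sum_filter_of_ne ?_).symm
            intro v _ hne
            exact lt_of_le_of_ne (inducedM_bounds hσ hs0 _).1 (Ne.symm hne)
        _ ≤ ∑ v ∈ S, (μ (cyl (List.ofFn v))).toReal :=
            Finset.sum_le_sum fun v _ => (inducedM_bounds hσ hs0 _).2
    have hmu : μ (U n) = ∑ v ∈ S, μ (cyl (List.ofFn v)) := by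
      rw [hU]; simp only; rw [hUeq]
      exact measure_biUnion_finset hdisj (fun v _ => cyl_measurable _)
    rw [hmu, ENNReal.toReal_sum (fun v _ => measure_ne_top μ _)]
    exact hcalc
  have hanti : Antitone U := by
    apply antitone_nat_of_succ_le
    intro n x hx
    simp only [hU, Set.mem_setOf_eq] at hx ⊢
    rw [List.range_succ, List.map_append] at hx
    exact inducedM_pos_parent hσ hs0 hx
  have hbr : branches {t | 0 < inducedM σ t} = ⋂ n, U n := by
    ext x
    simp [branches, Set.mem_iInter, hU]
  rw [hbr]
  have hcont : μ (⋂ n, U n) = ⨅ n, μ (U n) :=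
    hanti.measure_iInter (fun n => (hmeas n).nullMeasurableSet) ⟨0, measure_ne_top μ _⟩
  have hle : ENNReal.ofReal (inducedM σ []) ≤ μ (⋂ n, U n) := by
    rw [hcont]
    exact le_iInf fun n => (ENNReal.ofReal_le_iff_le_toReal (measure_ne_top μ _)).mpr (hbound n)
  exact (ENNReal.ofReal_le_iff_le_toReal (measure_ne_top μ _)).mp hle
/-- If `σ` is a winning strategy for player I in `G(s, A)`, then the induced `M` is a scaled
measure whose support tree `T` satisfies `[T] ⊆ Aᶜ` and `μ([T]) ≥ M(∅) > s`. -/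
theorem scaledMeasure_of_winning_I (μ : Measure Cantor) [IsProbabilityMeasure μ]
    (A : Set Cantor) (s : ℝ) (hs0 : 0 ≤ s) (hs1 : s < 1) (σ : StratI)
    (hσ : ∀ r : Run, ConsI σ r → ¬ IIWinsRun μ s A r) :
    ScaledMeasure μ (inducedM σ) ∧
      branches {t | 0 < inducedM σ t} ⊆ Aᶜ ∧
      s < inducedM σ [] ∧
      inducedM σ [] ≤ (μ (branches {t | 0 < inducedM σ t})).toReal := by
  refine ⟨⟨lt_of_le_of_lt hs0 (s_lt_inducedM hσ), fun t => ⟨inducedM_bounds hσ hs0 t, inducedM_add hσ t⟩⟩,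
    branches_subset_compl hσ, s_lt_inducedM hσ, inducedM_le_measure_branches hσ hs0⟩

end MeasureGame
end

section
/- Let τ be a winning strategy for player II in the measure game G(s,A). Let p be a finite position consistent with τ in which II's moves so far form the string t = x_0…x_n and I's moves form the sequence m̂ (so at each stage τ chose side x_i in response to the corresponding moves of I). For i ∈ {0,1} define δ(i) = inf( {m_{t⌢i} : there exists a legal next move (m_{t⌢0}, m_{t⌢1}) of player I at p with m_{t⌢0} + m_{t⌢1} = m_t and τ responds to it by choosing side i} ∪ {μ(N_{t⌢i})} ), where m_t is the value assigned to t by I's last move (and in the case of the empty position, r = s below). Then δ(0) + δ(1) ≤ r, where r = m_t if |t| > 0 and r = s if t is the empty string, and moreover δ(i) ≤ μ(N_{t⌢i}) for each i ∈ {0,1}. -/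
open MeasureTheory

namespace MeasureGame

/-- The value selected by player II's bit in a single round. -/
def selOf (p : GRound) : ℚ := if p.2 then p.1.2 else p.1.1

/-- `m` is a legal next move for player I after the finite position `h` in `G(s, ·)`:
both components are nonnegative, bounded by (and strictly below, when positive) the measures
of the corresponding cylinders, their sum exceeds `s` if `h` is the empty position, and
otherwise equals the value `m_t` selected by player II's last move. -/
def legalMoveI (μ : Measure Cantor) (s : ℝ) (h : List GRound) (m : ℚ × ℚ) : Prop :=
  (0 ≤ m.1 ∧ ((m.1 : ℝ) ≤ (μ (cyl ((h.map fun p => p.2) ++ [false]))).toReal) ∧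
    (0 < (μ (cyl ((h.map fun p => p.2) ++ [false]))).toReal →
      (m.1 : ℝ) < (μ (cyl ((h.map fun p => p.2) ++ [false]))).toReal)) ∧
  (0 ≤ m.2 ∧ ((m.2 : ℝ) ≤ (μ (cyl ((h.map fun p => p.2) ++ [true]))).toReal) ∧
    (0 < (μ (cyl ((h.map fun p => p.2) ++ [true]))).toReal →
      (m.2 : ℝ) < (μ (cyl ((h.map fun p => p.2) ++ [true]))).toReal)) ∧
  (if h.isEmpty then s < (m.1 : ℝ) + (m.2 : ℝ)
   else m.1 + m.2 = selOf (h.getLastD ((0, 0), false)))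


/-! ### Auxiliary machinery for the δ-lemma -/

/-- The next round played when player I plays along `h`, then `m`, then `(0,0)` forever,
while player II plays according to `τ`. -/
def nextRound (τ : StratII) (h : List GRound) (m : ℚ × ℚ) (L : List GRound) : GRound :=
  if L.length < h.length then h.getD L.length ((0, 0), false)
  else if L.length = h.length then (m, τ h m)
  else ((0, 0), τ L (0, 0))

/-- The position after `n` rounds of the run built from `nextRound`. -/
def posn (τ : StratII) (h : List GRound) (m : ℚ × ℚ) : ℕ → List GRound
  | 0 => []
  | n + 1 => posn τ h m n ++ [nextRound τ h m (posn τ h m n)]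

/-- The run built from `nextRound`. -/
def extRun (τ : StratII) (h : List GRound) (m : ℚ × ℚ) : Run :=
  fun n => nextRound τ h m (posn τ h m n)

lemma posn_length (τ : StratII) (h : List GRound) (m : ℚ × ℚ) :
    ∀ n, (posn τ h m n).length = n
  | 0 => rfl
  | n + 1 => by simp [posn, posn_length τ h m n]

lemma hist_succ (r : Run) (n : ℕ) : hist r (n + 1) = hist r n ++ [r n] := by
  simp [hist, List.range_succ]

lemma hist_extRun (τ : StratII) (h : List GRound) (m : ℚ × ℚ) :
    ∀ n, hist (extRun τ h m) n = posn τ h m n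
  | 0 => rfl
  | n + 1 => by
      rw [hist_succ, hist_extRun τ h m n]
      rfl

lemma posn_eq_take (τ : StratII) (h : List GRound) (m : ℚ × ℚ) :
    ∀ n, n ≤ h.length → posn τ h m n = h.take n
  | 0, _ => rfl
  | n + 1, hn => by
      have hlt : n < h.length := hn
      have ih := posn_eq_take τ h m n (Nat.le_of_lt hlt)
      show posn τ h m n ++ [nextRound τ h m (posn τ h m n)] = _
      rw [ih, nextRound]
      simp only [List.length_take, min_eq_left (Nat.le_of_lt hlt), if_pos hlt]
      rw [List.getD_eq_getElem h _ hlt, ← List.take_concat_get hlt, List.concat_eq_append]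

lemma extRun_lt (τ : StratII) (h : List GRound) (m : ℚ × ℚ) (n : ℕ) (hn : n < h.length) :
    extRun τ h m n = h.get ⟨n, hn⟩ := by
  show nextRound τ h m (posn τ h m n) = _
  rw [nextRound, posn_length, if_pos hn, List.getD_eq_getElem h _ hn]
  rfl

lemma extRun_eq (τ : StratII) (h : List GRound) (m : ℚ × ℚ) :
    extRun τ h m h.length = (m, τ h m) := by
  show nextRound τ h m (posn τ h m h.length) = _
  rw [nextRound, posn_length, if_neg (lt_irrefl _), if_pos rfl]

lemma extRun_gt (τ : StratII) (h : List GRound) (m : ℚ × ℚ) (n : ℕ) (hn : h.length < n) :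
    extRun τ h m n = ((0, 0), τ (posn τ h m n) (0, 0)) := by
  show nextRound τ h m (posn τ h m n) = _
  rw [nextRound, posn_length, if_neg (by omega), if_neg (by omega)]

lemma path_eq_hist (r : Run) (n : ℕ) : path r n = (hist r n).map (fun p => p.2) := by
  simp only [path, hist, List.map_map]
  exact List.map_congr_left fun _ _ => rfl

lemma sel_eq_selOf (r : Run) (n : ℕ) : sel r n = selOf (r n) := rfl

lemma hist_length (r : Run) (n : ℕ) : (hist r n).length = n := by simp [hist]

/-- Translation: a legal move in the list sense yields a legal round in the run sense. -/
lemma IOK_of_legal (μ : Measure Cantor) (s : ℝ) (r : Run) (n : ℕ)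
    (hl : legalMoveI μ s (hist r n) (r n).1) : IOK μ s r n := by
  obtain ⟨h0, h1, h2⟩ := hl
  rw [← path_eq_hist] at h0 h1
  have hv0 : valI r n false = (r n).1.1 := rfl
  have hv1 : valI r n true = (r n).1.2 := rfl
  cases n with
  | zero =>
      refine ⟨?_, ?_, ?_⟩
      · rw [mOK, hv0]; exact h0
      · rw [mOK, hv1]; exact h1
      · simpa [hist] using h2
  | succ k =>
      refine ⟨?_, ?_, ?_⟩
      · rw [mOK, hv0]; exact h0
      · rw [mOK, hv1]; exact h1
      · have he : hist r (k + 1) = hist r k ++ [r k] := hist_succ r k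
        rw [he, List.getLastD_concat] at h2
        rw [if_neg (by simp)] at h2
        rw [sel_eq_selOf]
        exact h2

/-- Key lemma: if `τ` wins and the position `h` is legal and consistent with `τ`, then
the value selected by `τ`'s answer to any legal move is nonzero. -/
lemma selected_ne_zero (μ : Measure Cantor) (A : Set Cantor) (s : ℝ) (τ : StratII)
    (hτ : ∀ r : Run, ConsII τ r → IIWinsRun μ s A r)
    (h : List GRound)
    (hcons : ∀ (k : ℕ) (hk : k < h.length), (h.get ⟨k, hk⟩).2 = τ (h.take k) (h.get ⟨k, hk⟩).1)
    (hlegalI : ∀ (k : ℕ) (hk : k < h.length), legalMoveI μ s (h.take k) (h.get ⟨k, hk⟩).1)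
    (m : ℚ × ℚ) (hm : legalMoveI μ s h m)
    (hz : (if τ h m then m.2 else m.1) = 0) : False := by
  set r : Run := extRun τ h m with hr
  have hhist : ∀ n, hist r n = posn τ h m n := hist_extRun τ h m
  have hfst : ∀ n, h.length < n → (r n).1 = (0, 0) := fun n hn => by
    rw [hr, extRun_gt τ h m n hn]
  have hsel : ∀ n, h.length ≤ n → sel r n = 0 := by
    intro n hn
    rcases eq_or_lt_of_le hn with hn' | hn'
    · rw [sel_eq_selOf, hr, ← hn', extRun_eq]
      simpa [selOf] using hz
    · rw [sel_eq_selOf, selOf, hfst n hn']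
      cases (r n).2 <;> simp
  have hIOK : ∀ n, IOK μ s r n := by
    intro n
    rcases lt_trichotomy n h.length with hn | hn | hn
    · apply IOK_of_legal
      rw [hhist, posn_eq_take τ h m n (Nat.le_of_lt hn), hr, extRun_lt τ h m n hn]
      exact hlegalI n hn
    · apply IOK_of_legal
      rw [hhist, hn, posn_eq_take τ h m _ le_rfl, List.take_length, hr, extRun_eq]
      exact hm
    · obtain ⟨k, rfl⟩ : ∃ k, n = k + 1 := ⟨n - 1, by omega⟩
      have hf := hfst (k + 1) hn
      have hmok : ∀ b, mOK μ r (k + 1) b := by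
        intro b
        have : valI r (k + 1) b = 0 := by
          rw [valI, hf]; cases b <;> simp
        rw [mOK, this]
        refine ⟨le_rfl, by simpa using ENNReal.toReal_nonneg, fun hpos => by simpa using hpos⟩
      refine ⟨hmok false, hmok true, ?_⟩
      rw [hf, hsel k (by omega)]
      simp
  have hcons' : ConsII τ r := by
    intro n
    rw [hhist]
    rcases lt_trichotomy n h.length with hn | hn | hn
    · rw [hr, extRun_lt τ h m n hn, posn_eq_take τ h m n (Nat.le_of_lt hn)]
      exact hcons n hn
    · rw [hn, posn_eq_take τ h m _ le_rfl, List.take_length, hr, extRun_eq]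
    · rw [hr, extRun_gt τ h m n hn]
  rcases hτ r hcons' with ⟨n, _, hn⟩ | ⟨hall, _⟩
  · exact hn (hIOK n)
  · exact (hall h.length).2 (hsel h.length le_rfl)

/-- The δ-lemma: if `τ` is a winning strategy for player II in `G(s, A)` and `h` is a finite
position consistent with `τ` in which all moves were legal, then, with `t` the string of II's
moves, `r = m_t` (or `r = s` at the empty position) and
`δ(i) = inf({mᵢ-components of legal moves of I to which τ answers i} ∪ {μ(N_{t⌢i})})`,
we have `δ(0) + δ(1) ≤ r` and `δ(i) ≤ μ(N_{t⌢i})` for each `i`. -/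
theorem delta_lemma (μ : Measure Cantor) [IsProbabilityMeasure μ]
    (A : Set Cantor) (s : ℝ) (hs0 : 0 ≤ s) (hs1 : s < 1) (τ : StratII)
    (hτ : ∀ r : Run, ConsII τ r → IIWinsRun μ s A r)
    (h : List GRound)
    (hcons : ∀ (k : ℕ) (hk : k < h.length), (h.get ⟨k, hk⟩).2 = τ (h.take k) (h.get ⟨k, hk⟩).1)
    (hlegalI : ∀ (k : ℕ) (hk : k < h.length), legalMoveI μ s (h.take k) (h.get ⟨k, hk⟩).1)
    (hlegalII : ∀ (k : ℕ) (hk : k < h.length), selOf (h.get ⟨k, hk⟩) ≠ 0) :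
    let t : List Bool := h.map fun p => p.2
    let rv : ℝ := if h.isEmpty then s else ((selOf (h.getLastD ((0, 0), false)) : ℚ) : ℝ)
    let δ : Bool → ℝ := fun i => sInf
      ({v : ℝ | ∃ m : ℚ × ℚ, legalMoveI μ s h m ∧ τ h m = i ∧
          v = ((if i then m.2 else m.1 : ℚ) : ℝ)} ∪ {(μ (cyl (t ++ [i]))).toReal})
    δ false + δ true ≤ rv ∧ ∀ i : Bool, δ i ≤ (μ (cyl (t ++ [i]))).toReal := by
  intro t rv δ
  have hrv : rv = if h.isEmpty then s else ((selOf (h.getLastD ((0, 0), false)) : ℚ) : ℝ) := rfl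
  have hbdd : ∀ i : Bool, BddBelow
      ({v : ℝ | ∃ m : ℚ × ℚ, legalMoveI μ s h m ∧ τ h m = i ∧
          v = ((if i then m.2 else m.1 : ℚ) : ℝ)} ∪ {(μ (cyl (t ++ [i]))).toReal}) := by
    intro i
    refine ⟨0, fun v hv => ?_⟩
    rcases hv with ⟨m, hm, _, rfl⟩ | hv
    · cases i
      · simpa using hm.1.1
      · simpa using hm.2.1.1
    · rw [Set.mem_singleton_iff] at hv
      rw [hv]
      exact ENNReal.toReal_nonneg
  have h2 : ∀ i : Bool, δ i ≤ (μ (cyl (t ++ [i]))).toReal :=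
    fun i => csInf_le (hbdd i) (Or.inr rfl)
  have h0 : ∀ i : Bool, 0 ≤ δ i := by
    intro i
    refine le_csInf ⟨_, Or.inr rfl⟩ (fun v hv => ?_)
    rcases hv with ⟨m, hm, _, rfl⟩ | hv
    · cases i
      · simpa using hm.1.1
      · simpa using hm.2.1.1
    · rw [Set.mem_singleton_iff] at hv
      rw [hv]
      exact ENNReal.toReal_nonneg
  have hB : ∀ m : ℚ × ℚ, legalMoveI μ s h m →
      δ (τ h m) ≤ ((if τ h m then m.2 else m.1 : ℚ) : ℝ) :=
    fun m hm => csInf_le (hbdd _) (Or.inl ⟨m, hm, rfl, rfl⟩)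
  have hA : ∀ m : ℚ × ℚ, legalMoveI μ s h m → (if τ h m then m.2 else m.1) ≠ 0 :=
    fun m hm hz => selected_ne_zero μ A s τ hτ h hcons hlegalI m hm hz
  refine ⟨?_, h2⟩
  by_contra hlt
  push_neg at hlt
  -- produce the contradicting move (q0, q1)
  obtain ⟨q0, q1, hq0, hq1, hd0, hd1, hsum⟩ :
      ∃ q0 q1 : ℚ, 0 ≤ q0 ∧ 0 ≤ q1 ∧
        ((q0 : ℝ) < δ false ∨ q0 = 0) ∧ ((q1 : ℝ) < δ true ∨ q1 = 0) ∧
        (if h.isEmpty then s < (q0 : ℝ) + (q1 : ℝ)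
         else q0 + q1 = selOf (h.getLastD ((0, 0), false))) := by
    by_cases hE : h.isEmpty = true
    · -- empty position: the sum only needs to exceed s
      rw [hrv, if_pos hE] at hlt
      by_cases hδ0 : δ false ≤ 0
      · have hs' : s < δ true := by linarith
        obtain ⟨q1, hq1a, hq1b⟩ := exists_rat_btwn hs'
        refine ⟨0, q1, le_rfl, ?_, Or.inr rfl, Or.inl hq1b, ?_⟩
        · exact_mod_cast le_of_lt (lt_of_le_of_lt hs0 hq1a)
        · rw [if_pos hE]
          push_cast
          linarith
      · by_cases hδ1 : δ true ≤ 0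
        · have hs' : s < δ false := by linarith
          obtain ⟨q0, hq0a, hq0b⟩ := exists_rat_btwn hs'
          refine ⟨q0, 0, ?_, le_rfl, Or.inl hq0b, Or.inr rfl, ?_⟩
          · exact_mod_cast le_of_lt (lt_of_le_of_lt hs0 hq0a)
          · rw [if_pos hE]
            push_cast
            linarith
        · push_neg at hδ0 hδ1
          set d : ℝ := δ false + δ true - s with hd
          have hdpos : 0 < d := by rw [hd]; linarith
          obtain ⟨q0, hq0a, hq0b⟩ :=
            exists_rat_btwn (show max (δ false - d / 2) 0 < δ false from
              max_lt (by linarith) hδ0)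
          obtain ⟨q1, hq1a, hq1b⟩ :=
            exists_rat_btwn (show max (δ true - d / 2) 0 < δ true from
              max_lt (by linarith) hδ1)
          have hm0 := le_max_left (δ false - d / 2) 0
          have hm1 := le_max_left (δ true - d / 2) 0
          have hz0 := le_max_right (δ false - d / 2) 0
          have hz1 := le_max_right (δ true - d / 2) 0
          refine ⟨q0, q1, ?_, ?_, Or.inl hq0b, Or.inl hq1b, ?_⟩
          · exact_mod_cast le_of_lt (lt_of_le_of_lt hz0 hq0a)
          · exact_mod_cast le_of_lt (lt_of_le_of_lt hz1 hq1a)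
          · rw [if_pos hE]
            have e0 : δ false - d / 2 < (q0 : ℝ) := lt_of_le_of_lt hm0 hq0a
            have e1 : δ true - d / 2 < (q1 : ℝ) := lt_of_le_of_lt hm1 hq1a
            rw [hd] at e0 e1
            linarith
    · -- nonempty position: the sum must equal the last selected value c
      have hE' : h.isEmpty = false := by simpa using hE
      rw [hrv, hE'] at hlt
      rw [if_neg (by simp)] at hlt
      set c : ℚ := selOf (h.getLastD ((0, 0), false)) with hc
      have hlen : 0 < h.length := by
        cases h with
        | nil => simp at hE'
        | cons a l => simp
      have hk : h.length - 1 < h.length := by omega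
      have hgl : h.getLastD ((0, 0), false) = h.get ⟨h.length - 1, hk⟩ := by
        have ht : h.take (h.length - 1 + 1) = h := by
          rw [show h.length - 1 + 1 = h.length by omega, List.take_length]
        conv_lhs => rw [← ht, ← List.take_concat_get hk, List.concat_eq_append,
          List.getLastD_concat]
        simp
      have hcpos : 0 < c := by
        rw [hc, hgl]
        have hne := hlegalII _ hk
        rcases hlegalI _ hk with ⟨⟨ha, _⟩, ⟨hb, _⟩, _⟩
        rw [selOf] at hne ⊢
        cases hbit : (h.get ⟨h.length - 1, hk⟩).2 <;> rw [hbit] at hne <;>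
          simp only [if_true, if_false, Bool.false_eq_true, ite_false, ite_true] at hne ⊢
        · exact lt_of_le_of_ne ha (Ne.symm hne)
        · exact lt_of_le_of_ne hb (Ne.symm hne)
      have hcpos' : (0 : ℝ) < (c : ℝ) := by exact_mod_cast hcpos
      by_cases hδ0 : δ false ≤ 0
      · refine ⟨0, c, le_rfl, le_of_lt hcpos, Or.inr rfl, Or.inl (by linarith), ?_⟩
        rw [if_neg (by simp [hE'])]
        simp
      · by_cases hδ1 : δ true ≤ 0
        · refine ⟨c, 0, le_of_lt hcpos, le_rfl, Or.inl (by linarith), Or.inr rfl, ?_⟩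
          rw [if_neg (by simp [hE'])]
          simp
        · push_neg at hδ0 hδ1
          obtain ⟨q0, hq0a, hq0b⟩ :=
            exists_rat_btwn (show max ((c : ℝ) - δ true) 0 < min (δ false) (c : ℝ) from
              max_lt (lt_min (by linarith) (by linarith)) (lt_min hδ0 hcpos'))
          have hm0 := le_max_left ((c : ℝ) - δ true) 0
          have hz0 := le_max_right ((c : ℝ) - δ true) 0
          have hu0 : (q0 : ℝ) < δ false := lt_of_lt_of_le hq0b (min_le_left _ _)
          have hu1 : (q0 : ℝ) < (c : ℝ) := lt_of_lt_of_le hq0b (min_le_right _ _)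
          refine ⟨q0, c - q0, ?_, ?_, Or.inl hu0, Or.inl ?_, ?_⟩
          · exact_mod_cast le_of_lt (lt_of_le_of_lt hz0 hq0a)
          · have : q0 ≤ c := by exact_mod_cast le_of_lt hu1
            linarith
          · have e0 : (c : ℝ) - δ true < (q0 : ℝ) := lt_of_le_of_lt hm0 hq0a
            push_cast
            linarith
          · rw [if_neg (by simp [hE'])]
            ring
  -- (q0, q1) is a legal move for player I
  have hleg : legalMoveI μ s h (q0, q1) := by
    refine ⟨⟨hq0, ?_, ?_⟩, ⟨hq1, ?_, ?_⟩, hsum⟩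
    · rcases hd0 with hd | hd
      · exact le_of_lt (lt_of_lt_of_le hd (h2 false))
      · rw [hd]; simpa using ENNReal.toReal_nonneg
    · intro hpos
      rcases hd0 with hd | hd
      · exact lt_of_lt_of_le hd (h2 false)
      · rw [hd]; simpa using hpos
    · rcases hd1 with hd | hd
      · exact le_of_lt (lt_of_lt_of_le hd (h2 true))
      · rw [hd]; simpa using ENNReal.toReal_nonneg
    · intro hpos
      rcases hd1 with hd | hd
      · exact lt_of_lt_of_le hd (h2 true)
      · rw [hd]; simpa using hpos
  have hble := hB (q0, q1) hleg
  have hane := hA (q0, q1) hleg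
  cases hi : τ h (q0, q1) with
  | false =>
      rw [hi] at hble hane
      simp only [if_false, Bool.false_eq_true, ite_false] at hble hane
      rcases hd0 with hd | hd
      · linarith
      · exact hane hd
  | true =>
      rw [hi] at hble hane
      simp only [if_true, ite_true] at hble hane
      rcases hd1 with hd | hd
      · linarith
      · exact hane hd

end MeasureGame
end
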